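/- Let q ∈ (−1,0) and let m ≥ 0 be an integer. For A, B ∈ ℂ and θ ∈ ℝ let M_{A,B,θ} be the unique bounded linear operator on ℓ²(ℕ) with M_{A,B,θ} e_k = e_{k+1} + q^k(A e^{iθ} + B e^{−iθ}) e_k + (1−q^{2k}) e_{k−1} for all k ∈ ℕ. If A, B, A′, B′ ∈ ℂ satisfy AB = A′B′, then ∫_0^{2π} ∑_{k=0}^∞ q^{2k} ⟨M_{A,B,θ}^m e_k, e_k⟩ dθ = ∫_0^{2π} ∑_{k=0}^∞ q^{2k} ⟨M_{A′,B′,θ}^m e_k, e_k⟩ dθ (both inner sums converging absolutely). -/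

import Mathlib

set_option synthInstance.maxHeartbeats 1000000
set_option maxHeartbeats 1000000


/-- `ℓ²(ℕ)`: square-summable complex sequences. -/
noncomputable def ell2 : Type := lp (fun _ : ℕ => ℂ) 2

noncomputable instance : NormedAddCommGroup ell2 := by unfold ell2; infer_instance
noncomputable instance : InnerProductSpace ℂ ell2 := by unfold ell2; infer_instance
instance : CompleteSpace ell2 := by unfold ell2; infer_instance

/-- The standard orthonormal basis vector `e_k` of `ℓ²(ℕ)`. -/
noncomputable def eb (k : ℕ) : ell2 := (lp.single 2 k (1 : ℂ) : lp (fun _ : ℕ => ℂ) 2)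

/-- The tridiagonal action `e_k ↦ e_{k+1} + q^k(A e^{iθ} + B e^{-iθ}) e_k + (1-q^{2k}) e_{k-1}`;
when `k = 0` the last coefficient vanishes, so the natural-subtraction index is harmless. -/
noncomputable def triAction (q : ℝ) (A B : ℂ) (θ : ℝ) (k : ℕ) : ell2 :=
  eb (k + 1) +
    ((q : ℂ) ^ k * (A * Complex.exp (θ * Complex.I) + B * Complex.exp (-θ * Complex.I))) • eb k +
    ((1 : ℂ) - (q : ℂ) ^ (2 * k)) • eb (k - 1)

noncomputable section Aux13

open Complex Finset
open scoped ENNReal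

abbrev L2 := lp (fun _ : ℕ => ℂ) 2

def toL2 (x : ell2) : L2 := x
def ofL2 (x : L2) : ell2 := x

lemma rp2 (x : ℝ) : x ^ ((2:ℝ≥0∞)).toReal = x ^ (2:ℕ) := by
  rw [show ((2:ℝ≥0∞)).toReal = ((2:ℕ):ℝ) by norm_num, Real.rpow_natCast]

lemma co_eb (k n : ℕ) : toL2 (eb k) n = if n = k then 1 else 0 := by
  show (lp.single 2 k (1:ℂ) : L2) n = _
  rw [lp.single_apply]
  split <;> simp_all

variable (w : ℕ → ℂ) (σ : ℕ → ℕ) (C : ℝ)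

lemma memℓp_w (hw : ∀ n, ‖w n‖ ≤ C)
    (hσ : Set.InjOn σ {n | w n ≠ 0}) (f : L2) :
    Memℓp (fun n => w n * f (σ n)) 2 := by
  have hf : Summable (fun n => ‖f n‖ ^ (2:ℕ)) := by
    have := (lp.memℓp f).summable (by norm_num : 0 < ((2:ℝ≥0∞)).toReal)
    simpa [rp2] using this
  have hinj : Function.Injective (fun s : {n | w n ≠ 0} => σ s) :=
    fun a b hab => Subtype.ext (hσ a.2 b.2 hab)
  have hsub : Summable (fun s : {n | w n ≠ 0} => ‖f (σ (s:ℕ))‖ ^ (2:ℕ)) :=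
    hf.comp_injective hinj
  have hind : Summable (Set.indicator {n | w n ≠ 0} (fun n => ‖f (σ n)‖ ^ (2:ℕ))) :=
    summable_subtype_iff_indicator.mp hsub
  apply memℓp_gen
  refine Summable.of_nonneg_of_le (fun n => ?_) (fun n => ?_) (hind.mul_left (C^2))
  · exact Real.rpow_nonneg (norm_nonneg _) _
  · rw [rp2]
    by_cases h : w n = 0
    · have h0 : ‖w n * f (σ n)‖ ^ (2:ℕ) = 0 := by simp [h]
      rw [h0]
      have : (0:ℝ) ≤ Set.indicator {n | w n ≠ 0} (fun n => ‖f (σ n)‖ ^ (2:ℕ)) n :=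
        Set.indicator_nonneg (fun n _ => by positivity) n
      positivity
    · have hin : n ∈ {n | w n ≠ 0} := h
      rw [Set.indicator_of_mem hin]
      have h1 : ‖w n * f (σ n)‖ = ‖w n‖ * ‖f (σ n)‖ := norm_mul _ _
      have h2 := hw n
      have h3 : (0:ℝ) ≤ ‖f (σ n)‖ := norm_nonneg _
      have h4 : (0:ℝ) ≤ ‖w n‖ := norm_nonneg _
      rw [h1, mul_pow]
      exact mul_le_mul_of_nonneg_right (pow_le_pow_left₀ h4 h2 2) (by positivity)

lemma tsum_w_le (hw : ∀ n, ‖w n‖ ≤ C)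
    (hσ : Set.InjOn σ {n | w n ≠ 0}) (f : L2) :
    (∑' n, ‖w n * f (σ n)‖ ^ (2:ℕ)) ≤ (C * ‖f‖) ^ (2:ℕ) := by
  have hC : 0 ≤ C := le_trans (norm_nonneg _) (hw 0)
  have hf : Summable (fun n => ‖f n‖ ^ (2:ℕ)) := by
    have := (lp.memℓp f).summable (by norm_num : 0 < ((2:ℝ≥0∞)).toReal)
    simpa [rp2] using this
  have hinj : Function.Injective (fun s : {n | w n ≠ 0} => σ s) :=
    fun a b hab => Subtype.ext (hσ a.2 b.2 hab)
  have hsub : Summable (fun s : {n | w n ≠ 0} => ‖f (σ (s:ℕ))‖ ^ (2:ℕ)) :=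
    hf.comp_injective hinj
  have hind : Summable (Set.indicator {n | w n ≠ 0} (fun n => ‖f (σ n)‖ ^ (2:ℕ))) :=
    summable_subtype_iff_indicator.mp hsub
  have hmem : Summable (fun n => ‖w n * f (σ n)‖ ^ (2:ℕ)) := by
    have := memℓp_w w σ C hw hσ f
    have h := this.summable (by norm_num : 0 < ((2:ℝ≥0∞)).toReal)
    simpa [rp2] using h
  have step1 : (∑' n, ‖w n * f (σ n)‖ ^ (2:ℕ)) ≤
      ∑' n, C^2 * Set.indicator {n | w n ≠ 0} (fun n => ‖f (σ n)‖ ^ (2:ℕ)) n := by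
    refine Summable.tsum_le_tsum (fun n => ?_) hmem (hind.mul_left (C^2))
    by_cases h : w n = 0
    · have h0 : ‖w n * f (σ n)‖ ^ (2:ℕ) = 0 := by simp [h]
      rw [h0]
      have : (0:ℝ) ≤ Set.indicator {n | w n ≠ 0} (fun n => ‖f (σ n)‖ ^ (2:ℕ)) n :=
        Set.indicator_nonneg (fun n _ => by positivity) n
      positivity
    · have hin : n ∈ {n | w n ≠ 0} := h
      rw [Set.indicator_of_mem hin]
      have h1 : ‖w n * f (σ n)‖ = ‖w n‖ * ‖f (σ n)‖ := norm_mul _ _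
      have h2 := hw n
      have h3 : (0:ℝ) ≤ ‖f (σ n)‖ := norm_nonneg _
      have h4 : (0:ℝ) ≤ ‖w n‖ := norm_nonneg _
      rw [h1, mul_pow]
      exact mul_le_mul_of_nonneg_right (pow_le_pow_left₀ h4 h2 2) (by positivity)
  have step2 : (∑' n, Set.indicator {n | w n ≠ 0} (fun n => ‖f (σ n)‖ ^ (2:ℕ)) n)
      ≤ ∑' n, ‖f n‖ ^ (2:ℕ) := by
    rw [← _root_.tsum_subtype]
    exact Summable.tsum_le_tsum_of_inj (fun s : {n | w n ≠ 0} => σ s) hinj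
      (fun c _ => by positivity) (fun s => le_rfl) hsub hf
  have hnf : (∑' n, ‖f n‖ ^ (2:ℕ)) = ‖f‖ ^ (2:ℕ) := by
    have := lp.norm_rpow_eq_tsum (by norm_num : 0 < ((2:ℝ≥0∞)).toReal) f
    simp only [rp2] at this
    exact this.symm
  calc (∑' n, ‖w n * f (σ n)‖ ^ (2:ℕ))
      ≤ ∑' n, C^2 * Set.indicator {n | w n ≠ 0} (fun n => ‖f (σ n)‖ ^ (2:ℕ)) n := step1
    _ = C^2 * ∑' n, Set.indicator {n | w n ≠ 0} (fun n => ‖f (σ n)‖ ^ (2:ℕ)) n :=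
        tsum_mul_left
    _ ≤ C^2 * ‖f‖^(2:ℕ) := by
        refine mul_le_mul_of_nonneg_left (le_trans step2 (le_of_eq hnf)) (by positivity)
    _ = (C * ‖f‖) ^ (2:ℕ) := by ring

def wCLM (hw : ∀ n, ‖w n‖ ≤ C) (hσ : Set.InjOn σ {n | w n ≠ 0}) : ell2 →L[ℂ] ell2 :=
  LinearMap.mkContinuous
    { toFun := fun x => ofL2 ⟨fun n => w n * toL2 x (σ n), memℓp_w w σ C hw hσ (toL2 x)⟩
      map_add' := fun x y => by
        show ofL2 _ = ofL2 (_ + _)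
        apply congrArg ofL2
        apply lp.ext
        funext n
        show w n * (toL2 x + toL2 y) (σ n) = _
        rw [lp.coeFn_add]
        show w n * (toL2 x (σ n) + toL2 y (σ n)) = _
        rw [mul_add]
        rfl
      map_smul' := fun c x => by
        show ofL2 _ = ofL2 (c • _)
        apply congrArg ofL2
        apply lp.ext
        funext n
        show w n * (c • toL2 x) (σ n) = (c • (⟨fun n => w n * toL2 x (σ n), _⟩ : L2)) n
        rw [lp.coeFn_smul, lp.coeFn_smul]
        show w n * (c * toL2 x (σ n)) = c * (w n * toL2 x (σ n))
        ring }
    C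
    (fun x => by
      have hC : 0 ≤ C := le_trans (norm_nonneg _) (hw 0)
      show ‖(⟨fun n => w n * toL2 x (σ n), _⟩ : L2)‖ ≤ C * ‖(toL2 x : L2)‖
      refine lp.norm_le_of_tsum_le (by norm_num) (by positivity) ?_
      have := tsum_w_le w σ C hw hσ (toL2 x)
      simpa [rp2] using this)

lemma wCLM_apply (hw : ∀ n, ‖w n‖ ≤ C) (hσ : Set.InjOn σ {n | w n ≠ 0}) (x : ell2) (n : ℕ) :
    toL2 (wCLM w σ C hw hσ x) n = w n * toL2 x (σ n) := rfl


lemma ell2_ext {x y : ell2} (h : ∀ n, toL2 x n = toL2 y n) : x = y := by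
  have : toL2 x = toL2 y := lp.ext (funext h)
  exact congrArg ofL2 this

section ops

variable (q : ℝ) (hq1 : |q| ≤ 1)

def Sop : ell2 →L[ℂ] ell2 :=
  wCLM (fun n => if n = 0 then (0:ℂ) else 1) (fun n => n - 1) 1
    (fun n => by split <;> norm_num)
    (fun a ha b hb hab => by
      simp only [Set.mem_setOf_eq] at ha hb
      have ha' : a ≠ 0 := by intro h; exact ha (by simp [h])
      have hb' : b ≠ 0 := by intro h; exact hb (by simp [h])
      dsimp only at hab
      omega)

def Dop : ell2 →L[ℂ] ell2 :=
  wCLM (fun n => (q:ℂ)^n) id 1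
    (fun n => by
      rw [norm_pow, Complex.norm_real, Real.norm_eq_abs]
      exact pow_le_one₀ (abs_nonneg q) hq1)
    (Function.injective_id.injOn)

def Lop : ell2 →L[ℂ] ell2 :=
  wCLM (fun n => (1:ℂ) - (q:ℂ)^(2*(n+1))) (fun n => n + 1) 2
    (fun n => by
      refine le_trans (norm_sub_le _ _) ?_
      rw [norm_one, norm_pow, Complex.norm_real, Real.norm_eq_abs]
      have : |q| ^ (2*(n+1)) ≤ 1 := pow_le_one₀ (abs_nonneg q) hq1
      linarith)
    ((add_left_injective 1).injOn)

lemma Sop_eb (k : ℕ) : Sop (eb k) = eb (k+1) := by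
  unfold Sop
  apply ell2_ext
  intro n
  show (if n = 0 then (0:ℂ) else 1) * toL2 (eb k) (n - 1) = _
  rw [co_eb, co_eb]
  rcases n with _ | n
  · simp
  · simp only [Nat.add_sub_cancel, if_neg (Nat.succ_ne_zero n)]
    by_cases h : n = k
    · simp [h]
    · rw [if_neg h, if_neg (by omega), one_mul]

lemma Dop_eb (k : ℕ) : Dop q hq1 (eb k) = ((q:ℂ)^k) • eb k := by
  unfold Dop
  apply ell2_ext
  intro n
  rw [wCLM_apply]
  show _ = ((q:ℂ)^k • toL2 (eb k)) n
  rw [lp.coeFn_smul, Pi.smul_apply, co_eb, co_eb, smul_eq_mul]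
  by_cases h : n = k
  · simp [h]
  · simp [h]

lemma Lop_eb (k : ℕ) : Lop q hq1 (eb k) = ((1:ℂ) - (q:ℂ)^(2*k)) • eb (k-1) := by
  unfold Lop
  apply ell2_ext
  intro n
  rw [wCLM_apply]
  show _ = (((1:ℂ) - (q:ℂ)^(2*k)) • toL2 (eb (k-1))) n
  rw [lp.coeFn_smul, Pi.smul_apply, co_eb, co_eb, smul_eq_mul]
  rcases k with _ | k
  · simp
  · simp only [Nat.add_sub_cancel]
    by_cases h : n = k
    · rw [if_pos (by omega), if_pos h, h]
    · rw [if_neg (by omega), if_neg h, mul_zero, mul_zero]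

def TT : ell2 →L[ℂ] ell2 := Sop + Lop q hq1

def Mc (z : ℂ) : ell2 →L[ℂ] ell2 := TT q hq1 + z • Dop q hq1

lemma Mc_apply_eb (z : ℂ) (k : ℕ) :
    Mc q hq1 z (eb k) =
      eb (k+1) + ((q:ℂ)^k * z) • eb k + ((1:ℂ) - (q:ℂ)^(2*k)) • eb (k-1) := by
  unfold Mc TT
  rw [ContinuousLinearMap.add_apply, ContinuousLinearMap.add_apply,
    ContinuousLinearMap.smul_apply, Sop_eb, Lop_eb, Dop_eb, smul_smul, mul_comm z]
  module

lemma clm_ext {M M' : ell2 →L[ℂ] ell2} (h : ∀ k, M (eb k) = M' (eb k)) : M = M' := by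
  ext x
  have h0 : HasSum (fun k => lp.single 2 k (toL2 x k)) (toL2 x) :=
    lp.hasSum_single (by norm_num) (toL2 x)
  have hfun : (fun k => lp.single 2 k (toL2 x k)) =
      fun k => (toL2 x k) • (lp.single 2 k (1:ℂ) : L2) := by
    funext k
    rw [← lp.single_smul]
    norm_num
  rw [hfun] at h0
  have hs : HasSum (fun k => (toL2 x k) • eb k) x := h0
  have hM : HasSum (fun k => (toL2 x k) • M (eb k)) (M x) := by
    have := hs.mapL M
    simpa [map_smul] using this
  have hM' : HasSum (fun k => (toL2 x k) • M' (eb k)) (M' x) := by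
    have := hs.mapL M'
    simpa [map_smul] using this
  have e : (fun k => (toL2 x k) • M' (eb k)) = fun k => (toL2 x k) • M (eb k) :=
    funext fun k => by rw [h]
  rw [e] at hM'
  exact hM.unique hM'

end ops


section pows

variable (q : ℝ) (hq1 : |q| ≤ 1)

def Uop : ℕ → ℕ → (ell2 →L[ℂ] ell2)
  | 0, 0 => 1
  | 0, _+1 => 0
  | j+1, 0 => (TT q hq1).comp (Uop j 0)
  | j+1, p+1 => (TT q hq1).comp (Uop j (p+1)) + (Dop q hq1).comp (Uop j p)

lemma Uop_eq_zero : ∀ j p : ℕ, j < p → Uop q hq1 j p = 0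
  | 0, _+1, _ => rfl
  | j+1, p+1, h => by
      rw [Uop, Uop_eq_zero j (p+1) (by omega), Uop_eq_zero j p (by omega)]
      simp

lemma Mc_pow (z : ℂ) : ∀ j : ℕ,
    (Mc q hq1 z)^j = ∑ p ∈ Finset.range (j+1), z^p • Uop q hq1 j p
  | 0 => by simp [Uop]
  | j+1 => by
      rw [pow_succ', Mc_pow z j]
      have hU0 : Uop q hq1 j (j+1) = 0 := Uop_eq_zero q hq1 j (j+1) (by omega)
      rw [show Mc q hq1 z = TT q hq1 + z • Dop q hq1 from rfl]
      rw [add_mul, Finset.mul_sum, smul_mul_assoc, Finset.mul_sum]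
      rw [Finset.smul_sum]
      simp only [mul_smul_comm, smul_smul]
      rw [Finset.sum_range_succ' (fun p => z^p • Uop q hq1 (j+1) p) (j+1)]
      have hrec0 : Uop q hq1 (j+1) 0 = (TT q hq1).comp (Uop q hq1 j 0) := rfl
      have hrec : ∀ p : ℕ, Uop q hq1 (j+1) (p+1) =
          (TT q hq1).comp (Uop q hq1 j (p+1)) + (Dop q hq1).comp (Uop q hq1 j p) :=
        fun p => rfl
      simp only [hrec, hrec0, pow_zero, one_smul, smul_add]
      rw [Finset.sum_add_distrib]
      have e1 : ∑ p ∈ Finset.range (j+1), z^p • (TT q hq1 * Uop q hq1 j p)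
          = (∑ p ∈ Finset.range (j+1), z^(p+1) • ((TT q hq1).comp (Uop q hq1 j (p+1))))
            + (TT q hq1).comp (Uop q hq1 j 0) := by
        rw [Finset.sum_range_succ (fun p => z^(p+1) • ((TT q hq1).comp (Uop q hq1 j (p+1)))) j]
        rw [Finset.sum_range_succ' (fun p => z^p • (TT q hq1 * Uop q hq1 j p)) j]
        rw [hU0]
        simp only [ContinuousLinearMap.comp_zero, smul_zero, add_zero, pow_zero, one_smul]
        rfl
      have e2 : ∀ p : ℕ, z * z^p = z^(p+1) := fun p => (pow_succ' z p).symm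
      simp only [e2]
      rw [e1]
      have e3 : ∀ p, z^(p+1) • (Dop q hq1 * Uop q hq1 j p)
          = z^(p+1) • ((Dop q hq1).comp (Uop q hq1 j p)) := fun p => rfl
      simp only [e3]
      abel

end pows


section integrals

lemma integral_cexp_int (n : ℤ) :
    (∫ θ in (0:ℝ)..(2*Real.pi), Complex.exp ((n:ℂ) * θ * Complex.I))
      = if n = 0 then ((2*Real.pi : ℝ) : ℂ) else 0 := by
  by_cases h : n = 0
  · rw [if_pos h, h]
    simp
  · rw [if_neg h]
    have hc : ((n:ℂ) * Complex.I) ≠ 0 :=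
      mul_ne_zero (Int.cast_ne_zero.mpr h) Complex.I_ne_zero
    have heq : ∀ θ:ℝ, (n:ℂ) * θ * Complex.I = ((n:ℂ)*Complex.I) * θ := fun θ => by ring
    simp only [heq]
    rw [integral_exp_mul_complex hc]
    have h1 : Complex.exp ((n:ℂ)*Complex.I * ((2*Real.pi : ℝ):ℂ)) = 1 := by
      have h2 := Complex.exp_int_mul_two_pi_mul_I n
      rw [← h2]
      congr 1
      push_cast
      ring
    rw [h1]
    norm_num

lemma cexp_cont (c : ℂ) : Continuous (fun θ : ℝ => Complex.exp (c * θ * Complex.I)) := by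
  fun_prop

lemma zf_pow_integral (p : ℕ) (a b : ℂ) :
    (∫ θ in (0:ℝ)..(2*Real.pi),
        (a * Complex.exp ((θ:ℂ) * Complex.I) + b * Complex.exp (-(θ:ℂ) * Complex.I))^p)
      = if p % 2 = 0 then ((2*Real.pi:ℝ):ℂ) * (p.choose (p/2)) * (a*b)^(p/2) else 0 := by
  have key : ∀ θ:ℝ, (a * Complex.exp ((θ:ℂ) * Complex.I) + b * Complex.exp (-(θ:ℂ) * Complex.I))^p
      = ∑ j ∈ Finset.range (p+1),
          (a^j * b^(p-j) * (p.choose j : ℂ)) *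
            Complex.exp (((2*(j:ℤ) - (p:ℤ) : ℤ):ℂ) * θ * Complex.I) := by
    intro θ
    rw [add_pow]
    refine Finset.sum_congr rfl fun j hj => ?_
    have hjp : j ≤ p := by
      have := Finset.mem_range.mp hj
      omega
    rw [mul_pow, mul_pow, ← Complex.exp_nat_mul, ← Complex.exp_nat_mul]
    have hexp : Complex.exp ((j:ℂ) * ((θ:ℂ) * Complex.I)) *
        Complex.exp (((p-j : ℕ):ℂ) * (-(θ:ℂ) * Complex.I))
        = Complex.exp (((2*(j:ℤ) - (p:ℤ) : ℤ):ℂ) * θ * Complex.I) := by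
      rw [← Complex.exp_add]
      congr 1
      have hc : ((p-j : ℕ):ℂ) = (p:ℂ) - (j:ℂ) := by
        push_cast [Nat.cast_sub hjp]
        ring
      rw [hc]
      push_cast
      ring
    calc a ^ j * Complex.exp ((j:ℂ) * ((θ:ℂ) * Complex.I)) *
          (b ^ (p - j) * Complex.exp (((p-j : ℕ):ℂ) * (-(θ:ℂ) * Complex.I))) * (p.choose j : ℂ)
        = (a^j * b^(p-j) * (p.choose j : ℂ)) *
            (Complex.exp ((j:ℂ) * ((θ:ℂ) * Complex.I)) *
             Complex.exp (((p-j : ℕ):ℂ) * (-(θ:ℂ) * Complex.I))) := by ring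
      _ = _ := by rw [hexp]
  rw [intervalIntegral.integral_congr (g :=
      fun θ => ∑ j ∈ Finset.range (p+1),
          (a^j * b^(p-j) * (p.choose j : ℂ)) *
            Complex.exp (((2*(j:ℤ) - (p:ℤ) : ℤ):ℂ) * θ * Complex.I))
      (fun θ _ => key θ)]
  rw [intervalIntegral.integral_finset_sum (fun j _ =>
      ((Continuous.intervalIntegrable (by fun_prop) _ _)))]
  simp only [intervalIntegral.integral_const_mul, integral_cexp_int]
  by_cases hp : p % 2 = 0
  · rw [if_pos hp]
    rw [Finset.sum_eq_single (p/2)]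
    · rw [if_pos (by omega), show p - p/2 = p/2 by omega, mul_pow]
      ring
    · intro j hj hne
      rw [if_neg (by omega), mul_zero]
    · intro h
      exact absurd (Finset.mem_range.mpr (by omega)) h
  · rw [if_neg hp]
    refine Finset.sum_eq_zero fun j hj => ?_
    rw [if_neg (by omega), mul_zero]

end integrals


section main

variable (q : ℝ) (hq1 : |q| ≤ 1) (hq2 : q^2 < 1) (m : ℕ)

def acoef (k p : ℕ) : ℂ := inner ℂ (Uop q hq1 m p (eb k)) (eb k)

lemma norm_eb (k : ℕ) : ‖eb k‖ = 1 := by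
  show ‖(lp.single 2 k (1:ℂ) : L2)‖ = 1
  have := lp.norm_single (E := fun _ : ℕ => ℂ) (by norm_num : (0:ℝ≥0∞) < 2) k (1:ℂ)
  simpa using this

lemma acoef_bound (p k : ℕ) : ‖acoef q hq1 m k p‖ ≤ ‖Uop q hq1 m p‖ := by
  have h1 := norm_inner_le_norm (𝕜 := ℂ) (Uop q hq1 m p (eb k)) (eb k)
  have h2 := (Uop q hq1 m p).le_opNorm (eb k)
  rw [norm_eb, mul_one] at h1 h2
  exact le_trans h1 h2

include hq2 in
lemma summable_acoef (p : ℕ) :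
    Summable (fun k => (q:ℂ)^(2*k) * acoef q hq1 m k p) := by
  refine Summable.of_norm_bounded (g := fun k => ‖Uop q hq1 m p‖ * (q^2)^k)
    ((summable_geometric_of_lt_one (by positivity) hq2).mul_left _) (fun k => ?_)
  rw [norm_mul]
  have h1 : ‖(q:ℂ)^(2*k)‖ = (q^2)^k := by
    rw [norm_pow, Complex.norm_real, Real.norm_eq_abs, pow_mul, _root_.sq_abs]
  rw [h1]
  calc (q^2)^k * ‖acoef q hq1 m k p‖ ≤ (q^2)^k * ‖Uop q hq1 m p‖ :=
        mul_le_mul_of_nonneg_left (acoef_bound q hq1 m p k) (by positivity)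
    _ = _ := mul_comm _ _

def bcoef (p : ℕ) : ℂ := ∑' k, (q:ℂ)^(2*k) * acoef q hq1 m k p

include hq2 in
lemma pointwise (z : ℂ) :
    (∑' k : ℕ, (q:ℂ)^(2*k) * (inner ℂ ((Mc q hq1 z ^ m) (eb k)) (eb k) : ℂ))
    = ∑ p ∈ Finset.range (m+1), (starRingEnd ℂ z)^p * bcoef q hq1 m p := by
  have h1 : ∀ k : ℕ, (q:ℂ)^(2*k) * (inner ℂ ((Mc q hq1 z ^ m) (eb k)) (eb k) : ℂ)
      = ∑ p ∈ Finset.range (m+1),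
          (starRingEnd ℂ z)^p * ((q:ℂ)^(2*k) * acoef q hq1 m k p) := by
    intro k
    rw [Mc_pow q hq1 z m, ContinuousLinearMap.sum_apply]
    erw [sum_inner (𝕜 := ℂ)]
    rw [Finset.mul_sum]
    refine Finset.sum_congr rfl fun p _ => ?_
    rw [ContinuousLinearMap.smul_apply, inner_smul_left, map_pow]
    show (q:ℂ)^(2*k) * ((starRingEnd ℂ z)^p * acoef q hq1 m k p) = _
    ring
  rw [tsum_congr h1]
  have := (hasSum_sum (s := Finset.range (m+1))
    (f := fun p k => (starRingEnd ℂ z)^p * ((q:ℂ)^(2*k) * acoef q hq1 m k p))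
    (a := fun p => (starRingEnd ℂ z)^p * bcoef q hq1 m p)
    (fun p _ => ((summable_acoef q hq1 hq2 m p).hasSum.mul_left _))).tsum_eq
  exact this

include hq2 in
lemma integral_eval (A B : ℂ) (M : ℝ → (ell2 →L[ℂ] ell2))
    (hM : ∀ θ : ℝ, ∀ k : ℕ, M θ (eb k) = triAction q A B θ k) :
    (∫ θ in (0:ℝ)..(2*Real.pi),
        ∑' k : ℕ, (q:ℂ)^(2*k) * (inner ℂ ((M θ ^ m) (eb k)) (eb k) : ℂ))
    = ∑ p ∈ Finset.range (m+1),
        (if p % 2 = 0 then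
            ((2*Real.pi:ℝ):ℂ) * (p.choose (p/2)) * ((starRingEnd ℂ) (A*B))^(p/2)
          else 0) * bcoef q hq1 m p := by
  have hMc : ∀ θ : ℝ, M θ = Mc q hq1
      (A * Complex.exp ((θ:ℂ) * Complex.I) + B * Complex.exp (-(θ:ℂ) * Complex.I)) := by
    intro θ
    refine clm_ext fun k => ?_
    rw [hM θ k, Mc_apply_eb]
    rfl
  rw [intervalIntegral.integral_congr (g := fun θ =>
      ∑ p ∈ Finset.range (m+1),
        ((starRingEnd ℂ) B * Complex.exp ((θ:ℂ) * Complex.I)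
          + (starRingEnd ℂ) A * Complex.exp (-(θ:ℂ) * Complex.I))^p * bcoef q hq1 m p)
      (fun θ _ => ?_)]
  · rw [intervalIntegral.integral_finset_sum
      (fun p _ => (Continuous.intervalIntegrable (by fun_prop) _ _))]
    refine Finset.sum_congr rfl fun p _ => ?_
    rw [intervalIntegral.integral_mul_const, zf_pow_integral]
    congr 2
    rw [← map_mul, mul_comm B A]
  · rw [hMc θ, pointwise q hq1 hq2 m]
    refine Finset.sum_congr rfl fun p _ => ?_
    congr 2
    simp only [map_add, map_mul, ← Complex.exp_conj, map_neg, Complex.conj_ofReal,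
      Complex.conj_I, mul_neg, neg_mul]
    ring_nf

end main

end Aux13

theorem stmt13 (q : ℝ) (hq : q ∈ Set.Ioo (-1 : ℝ) 0) (m : ℕ) :
    (∀ A B : ℂ, ∀ θ : ℝ, ∃! M : ell2 →L[ℂ] ell2, ∀ k : ℕ, M (eb k) = triAction q A B θ k) ∧
    (∀ A B A' B' : ℂ, A * B = A' * B' →
      ∀ M M' : ℝ → (ell2 →L[ℂ] ell2),
        (∀ θ : ℝ, ∀ k : ℕ, M θ (eb k) = triAction q A B θ k) →
        (∀ θ : ℝ, ∀ k : ℕ, M' θ (eb k) = triAction q A' B' θ k) →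
        (∫ θ in (0 : ℝ)..(2 * Real.pi),
            ∑' k : ℕ, (q : ℂ) ^ (2 * k) * (inner ℂ ((M θ ^ m) (eb k)) (eb k) : ℂ)) =
          ∫ θ in (0 : ℝ)..(2 * Real.pi),
            ∑' k : ℕ, (q : ℂ) ^ (2 * k) * (inner ℂ ((M' θ ^ m) (eb k)) (eb k) : ℂ)) := by
  obtain ⟨hqa, hqb⟩ := hq
  have hq1 : |q| ≤ 1 := le_of_lt (abs_lt.mpr ⟨hqa, lt_trans hqb zero_lt_one⟩)
  have hq2 : q^2 < 1 := by nlinarith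
  constructor
  · intro A B θ
    refine ⟨Mc q hq1 (A * Complex.exp ((θ:ℂ) * Complex.I)
        + B * Complex.exp (-(θ:ℂ) * Complex.I)), fun k => ?_, fun N hN => ?_⟩
    · rw [Mc_apply_eb]
      rfl
    · refine clm_ext fun k => ?_
      rw [hN k, Mc_apply_eb]
      rfl
  · intro A B A' B' hAB M M' hM hM'
    rw [integral_eval q hq1 hq2 m A B M hM, integral_eval q hq1 hq2 m A' B' M' hM', hAB]
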